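/- For every n ≥ 1, the derivative of the polynomial P_n satisfies P_n′(x) = ∑_{k=1}^n (σ(k)/k)·P_{n−k}(x). -/

import Mathlib

open Polynomial Finset

/-- The polynomials `P n` defined by `P 0 = 1` and
`n * P n = X * ∑_{k=1}^n σ(k) * P (n-k)`, i.e. the coefficients of
`∏ (1 - q^j)^{-x} = ∑ P_n(x) q^n`. -/
noncomputable def P : ℕ → Polynomial ℝ
  | 0 => 1
  | n + 1 => ((n + 1 : ℝ)⁻¹) • (X * ∑ k ∈ Finset.range (n + 1),
      ((∑ d ∈ (k + 1).divisors, d : ℕ) : ℝ) • P (n - k))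

/-- `Δ a b = P (a-1) * P (b+1) - P a * P b`. -/
noncomputable def Δ (a b : ℕ) : Polynomial ℝ :=
  P (a - 1) * P (b + 1) - P a * P b

noncomputable def s (k : ℕ) : ℝ := ((∑ d ∈ k.divisors, d : ℕ) : ℝ)

noncomputable def S (n : ℕ) : Polynomial ℝ :=
  ∑ k ∈ Finset.Icc 1 n, (s k / k) • P (n - k)

lemma sum_shift (N : ℕ) (g : ℕ → Polynomial ℝ) :
    ∑ k ∈ Finset.Icc 1 (N + 1), g k = ∑ k ∈ Finset.range (N + 1), g (k + 1) := by
  rw [← Finset.Ico_add_one_right_eq_Icc, Finset.sum_Ico_eq_sum_range]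
  apply Finset.sum_congr rfl
  intro k _
  rw [Nat.add_comm]

lemma swap_sum (N : ℕ) (f : ℕ → ℕ → Polynomial ℝ) :
    ∑ k ∈ Finset.Icc 1 N, ∑ j ∈ Finset.Icc 1 (N - k), f k j =
    ∑ k ∈ Finset.Icc 1 N, ∑ j ∈ Finset.Icc 1 (N - k), f j k := by
  rw [Finset.sum_sigma', Finset.sum_sigma']
  apply Finset.sum_nbij' (fun p => ⟨p.2, p.1⟩) (fun p => ⟨p.2, p.1⟩)
  · rintro ⟨a, b⟩ hp
    simp only [Finset.mem_sigma, Finset.mem_Icc] at hp ⊢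
    omega
  · rintro ⟨a, b⟩ hp
    simp only [Finset.mem_sigma, Finset.mem_Icc] at hp ⊢
    omega
  · rintro ⟨a, b⟩ _; rfl
  · rintro ⟨a, b⟩ _; rfl
  · rintro ⟨a, b⟩ _; rfl

lemma P_rec (n : ℕ) :
    (n : ℝ) • P n = X * ∑ k ∈ Finset.Icc 1 n, s k • P (n - k) := by
  cases n with
  | zero => simp
  | succ m =>
    rw [sum_shift]
    show ((m + 1 : ℕ) : ℝ) • P (m + 1) = _
    rw [P, smul_smul, Nat.cast_add, Nat.cast_one, mul_inv_cancel₀ (by positivity), one_smul]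
    congr 1
    apply Finset.sum_congr rfl
    intro k _
    simp [s, Nat.succ_sub_succ]

lemma aux (n : ℕ) : Polynomial.derivative (P n) = S n := by
  induction n using Nat.strong_induction_on with
  | _ n ih =>
    match n with
    | 0 => simp [P, S]
    | m + 1 =>
      have hNne : ((m + 1 : ℕ) : ℝ) ≠ 0 := by positivity
      apply smul_right_injective (Polynomial ℝ) hNne
      show ((m + 1 : ℕ) : ℝ) • _ = ((m + 1 : ℕ) : ℝ) • _
      have hL : ((m + 1 : ℕ) : ℝ) • Polynomial.derivative (P (m + 1)) =
          (∑ k ∈ Finset.Icc 1 (m + 1), s k • P (m + 1 - k)) +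
          X * ∑ k ∈ Finset.Icc 1 (m + 1), s k • S (m + 1 - k) := by
        conv_lhs => rw [P]
        rw [derivative_smul, smul_smul, Nat.cast_add, Nat.cast_one,
          mul_inv_cancel₀ (by positivity), one_smul, derivative_mul, derivative_X, one_mul]
        congr 1
        · rw [sum_shift]
          apply Finset.sum_congr rfl
          intro k _
          simp [s, Nat.succ_sub_succ]
        · congr 1
          rw [derivative_sum, sum_shift]
          apply Finset.sum_congr rfl
          intro k hk
          rw [derivative_smul, ih (m - k) (by omega)]
          simp [s, Nat.succ_sub_succ]
      have hR : ((m + 1 : ℕ) : ℝ) • S (m + 1) =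
          (∑ k ∈ Finset.Icc 1 (m + 1), s k • P (m + 1 - k)) +
          X * ∑ k ∈ Finset.Icc 1 (m + 1), s k • S (m + 1 - k) := by
        rw [S, Finset.smul_sum]
        have step : ∀ k ∈ Finset.Icc 1 (m + 1),
            ((m + 1 : ℕ) : ℝ) • ((s k / k) • P (m + 1 - k)) =
            s k • P (m + 1 - k) +
              X * ∑ j ∈ Finset.Icc 1 (m + 1 - k), (s k / k * s j) • P (m + 1 - k - j) := by
          intro k hk
          simp only [Finset.mem_Icc] at hk
          have hk0 : (k : ℝ) ≠ 0 := Nat.cast_ne_zero.mpr (by omega)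
          have h1 : ((m + 1 : ℕ) : ℝ) • ((s k / k) • P (m + 1 - k)) =
              s k • P (m + 1 - k) + (s k / k) • (((m + 1 - k : ℕ) : ℝ) • P (m + 1 - k)) := by
            rw [smul_smul, smul_smul, ← add_smul]
            congr 1
            rw [Nat.cast_sub (by omega)]
            push_cast
            field_simp
            ring
          rw [h1, P_rec, ← mul_smul_comm, Finset.smul_sum]
          congr 2
          apply Finset.sum_congr rfl
          intro j hj
          rw [smul_smul]
        rw [Finset.sum_congr rfl step, Finset.sum_add_distrib, ← Finset.mul_sum]
        rw [add_right_inj]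
        congr 1
        rw [swap_sum (m + 1) (fun k j => (s k / k * s j) • P (m + 1 - k - j))]
        apply Finset.sum_congr rfl
        intro k hk
        rw [S, Finset.smul_sum]
        apply Finset.sum_congr rfl
        intro j hj
        rw [smul_smul]
        have h2 : m + 1 - j - k = m + 1 - k - j := by omega
        rw [h2]
        congr 1
        ring
      rw [hL, hR]

theorem stmt12 (n : ℕ) (hn : 1 ≤ n) :
    Polynomial.derivative (P n) =
      ∑ k ∈ Finset.Icc 1 n, (((∑ d ∈ k.divisors, d : ℕ) : ℝ) / k) • P (n - k) := by
  exact aux n
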